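/- For every real number w ≥ 0, the second derivative of log I₀ satisfies 0 < (log I₀)''(w) ≤ 1/2. -/

import Mathlib

open Real

/-- The modified Bessel function of the first kind of order zero,
`I0(w) = sum_k w^(2k) / (4^k (k!)^2)`. -/
noncomputable def besselI0 (w : ℝ) : ℝ :=
  ∑' k : ℕ, w ^ (2 * k) / (4 ^ k * (k.factorial : ℝ) ^ 2)

/-- The modified Bessel function of the first kind of order one (the derivative of `besselI0`),
`I1(w) = sum_k w^(2k+1) / (2^(2k+1) k! (k+1)!)`. -/
noncomputable def besselI1 (w : ℝ) : ℝ :=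
  ∑' k : ℕ, w ^ (2 * k + 1) / (2 ^ (2 * k + 1) * (k.factorial : ℝ) * ((k + 1).factorial : ℝ))

namespace BesselAux

/-- the even part `I1(w)/w`. -/
noncomputable def besselT (w : ℝ) : ℝ :=
  ∑' k : ℕ, w ^ (2 * k) / (2 ^ (2 * k + 1) * (k.factorial : ℝ) * ((k + 1).factorial : ℝ))

/-- the derivative of `besselI1`. -/
noncomputable def besselS (w : ℝ) : ℝ :=
  ∑' k : ℕ, ((2 * k + 1 : ℕ) : ℝ) * w ^ (2 * k) /
    (2 ^ (2 * k + 1) * (k.factorial : ℝ) * ((k + 1).factorial : ℝ))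

lemma fact_pos (k : ℕ) : (0:ℝ) < (k.factorial : ℝ) := by
  exact_mod_cast k.factorial_pos

/-- master summability lemma -/
lemma summable_master (m : ℕ) (x : ℝ) (hx : 0 ≤ x) :
    Summable (fun k : ℕ => ((k:ℝ)+1) ^ m * x ^ k / ((k.factorial : ℝ))^2) := by
  have h2 : Summable (fun k : ℕ => (2:ℝ)^m * (((2:ℝ)^m * x) ^ k / (k.factorial : ℝ))) :=
    (Real.summable_pow_div_factorial ((2:ℝ)^m * x)).mul_left _
  refine h2.of_nonneg_of_le (fun k => by positivity) (fun k => ?_)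
  have hk1 : ((k:ℝ)+1) ≤ 2 * 2 ^ k := by
    have := Nat.lt_two_pow_self (n := k+1)
    have : (k:ℝ) + 1 ≤ 2 ^ (k+1) := by exact_mod_cast this.le
    simpa [pow_succ, mul_comm] using this
  have hfact1 : (1:ℝ) ≤ (k.factorial : ℝ) := by exact_mod_cast k.factorial_pos
  have hf := fact_pos k
  calc ((k:ℝ)+1) ^ m * x ^ k / ((k.factorial : ℝ))^2
      ≤ (2 * 2^k) ^ m * x ^ k / ((k.factorial : ℝ))^2 := by
        have : ((k:ℝ)+1) ^ m ≤ (2 * 2^k) ^ m := by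
          apply pow_le_pow_left₀ (by positivity) hk1
        apply div_le_div_of_nonneg_right ?_ (by positivity)
        exact mul_le_mul_of_nonneg_right this (by positivity)
    _ ≤ (2 * 2^k) ^ m * x ^ k / ((k.factorial : ℝ)) := by
        apply div_le_div_of_nonneg_left (by positivity) hf
        nlinarith
    _ = (2:ℝ)^m * (((2:ℝ)^m * x) ^ k / (k.factorial : ℝ)) := by
        rw [mul_pow, mul_pow, ← pow_mul, ← pow_mul, mul_comm k m]
        ring

lemma cpos (k : ℕ) : (0:ℝ) < 4 ^ k * (k.factorial : ℝ)^2 := by positivity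

lemma dpos (k : ℕ) : (0:ℝ) < 2 ^ (2*k+1) * (k.factorial : ℝ) * ((k+1).factorial : ℝ) := by
  positivity

lemma fact_le_succ (k : ℕ) : (k.factorial : ℝ) ≤ ((k+1).factorial : ℝ) := by
  exact_mod_cast Nat.factorial_le (Nat.le_succ k)

lemma two_pow_eq (k : ℕ) : (2:ℝ) ^ (2*k+1) = 2 * 4 ^ k := by
  rw [pow_succ, pow_mul]
  norm_num [mul_comm]

lemma even_pow_nonneg (x : ℝ) (k : ℕ) : 0 ≤ x ^ (2*k) := by
  rw [pow_mul]; positivity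

lemma summable_I0 (x : ℝ) : Summable (fun k : ℕ => x ^ (2*k) / (4^k * (k.factorial:ℝ)^2)) := by
  refine (summable_master 0 (x^2/4) (by positivity)).congr (fun k => ?_)
  rw [pow_zero, one_mul, div_pow, ← pow_mul, div_div]

lemma summable_T (x : ℝ) :
    Summable (fun k : ℕ =>
      x ^ (2*k) / (2 ^ (2*k+1) * (k.factorial:ℝ) * ((k+1).factorial : ℝ))) := by
  refine (summable_I0 x).of_nonneg_of_le
    (fun k => div_nonneg (even_pow_nonneg x k) (dpos k).le) (fun k => ?_)
  apply div_le_div_of_nonneg_left (even_pow_nonneg x k) (cpos k)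
  rw [two_pow_eq]
  have h := mul_le_mul_of_nonneg_left (fact_le_succ k) (fact_pos k).le
  have h4 : (0:ℝ) < 4 ^ k := by positivity
  nlinarith [mul_le_mul_of_nonneg_left h h4.le, mul_pos (mul_pos h4 (fact_pos k)) (fact_pos (k+1))]

lemma summable_S (x : ℝ) :
    Summable (fun k : ℕ => ((2*k+1 : ℕ):ℝ) * x ^ (2*k) /
      (2 ^ (2*k+1) * (k.factorial:ℝ) * ((k+1).factorial : ℝ))) := by
  refine (summable_master 1 (x^2/4) (by positivity)).of_nonneg_of_le
    (fun k => div_nonneg (mul_nonneg (by positivity) (even_pow_nonneg x k)) (dpos k).le)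
    (fun k => ?_)
  have hX := even_pow_nonneg x k
  have h1 : ((k:ℝ)+1) ^ 1 * (x^2/4) ^ k / ((k.factorial : ℝ))^2
      = ((k:ℝ)+1) / (4 ^ k * (k.factorial : ℝ)^2) * x ^ (2*k) := by
    rw [pow_one, div_pow, ← pow_mul]
    ring
  have hc : ((2*k+1 : ℕ):ℝ) / (2 ^ (2*k+1) * (k.factorial:ℝ) * ((k+1).factorial : ℝ))
      ≤ ((k:ℝ)+1) / (4 ^ k * (k.factorial : ℝ)^2) := by
    rw [div_le_div_iff₀ (dpos k) (cpos k), two_pow_eq]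
    push_cast
    have h := mul_le_mul_of_nonneg_left (fact_le_succ k) (fact_pos k).le
    have h4 : (0:ℝ) < 4 ^ k := by positivity
    nlinarith [mul_le_mul_of_nonneg_left h h4.le,
      mul_pos (mul_pos h4 (fact_pos k)) (fact_pos (k+1)),
      mul_le_mul_of_nonneg_left (mul_le_mul_of_nonneg_left h h4.le)
        (show (0:ℝ) ≤ 2*(k:ℝ)+1 by positivity)]
  rw [h1, mul_div_right_comm]
  exact mul_le_mul_of_nonneg_right hc hX

lemma summable_I1 (x : ℝ) :
    Summable (fun k : ℕ =>
      x ^ (2*k+1) / (2 ^ (2*k+1) * (k.factorial:ℝ) * ((k+1).factorial : ℝ))) := by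
  refine ((summable_T x).mul_left x).congr (fun k => ?_)
  rw [← mul_div_assoc, ← pow_succ']

lemma coeff_S_le (k : ℕ) :
    ((2*k+1 : ℕ):ℝ) / (2 ^ (2*k+1) * (k.factorial:ℝ) * ((k+1).factorial : ℝ))
      ≤ ((k:ℝ)+1) / (4 ^ k * (k.factorial : ℝ)^2) := by
  rw [div_le_div_iff₀ (dpos k) (cpos k), two_pow_eq]
  push_cast
  have h := mul_le_mul_of_nonneg_left (fact_le_succ k) (fact_pos k).le
  have h4 : (0:ℝ) < 4 ^ k := by positivity
  nlinarith [mul_le_mul_of_nonneg_left h h4.le,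
    mul_pos (mul_pos h4 (fact_pos k)) (fact_pos (k+1)),
    mul_le_mul_of_nonneg_left (mul_le_mul_of_nonneg_left h h4.le)
      (show (0:ℝ) ≤ 2*(k:ℝ)+1 by positivity)]

lemma summable_u (R : ℝ) :
    Summable (fun k : ℕ => 2 * (((k:ℝ)+1) * (R^2/4) ^ k / ((k.factorial : ℝ))^2)) := by
  refine ((summable_master 1 (R^2/4) (by positivity)).mul_left 2).congr (fun k => ?_)
  rw [pow_one]

lemma I0_pos (x : ℝ) : 0 < besselI0 x := by
  have h1 : (1:ℝ) ≤ besselI0 x := by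
    have h0 : x ^ (2*0) / (4^0 * ((Nat.factorial 0 : ℕ):ℝ)^2) = 1 := by norm_num
    calc (1:ℝ) = x ^ (2*0) / (4^0 * ((Nat.factorial 0 : ℕ):ℝ)^2) := h0.symm
      _ ≤ besselI0 x := Summable.le_tsum (summable_I0 x) 0
          (fun k _ => div_nonneg (even_pow_nonneg x k) (cpos k).le)
  linarith

lemma hasDerivAt_I0 (x : ℝ) : HasDerivAt besselI0 (besselI1 x) x := by
  set R : ℝ := |x| + 1 with hR
  have hR1 : (1:ℝ) ≤ R := by rw [hR]; linarith [abs_nonneg x]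
  have hxR : x ∈ Set.Ioo (-R) R := by
    have : |x| < R := by rw [hR]; linarith
    exact ⟨neg_lt_of_abs_lt this, lt_of_abs_lt this⟩
  have hbound : ∀ (k : ℕ) (y : ℝ), y ∈ Set.Ioo (-R) R →
      ‖((2*k : ℕ):ℝ) * y ^ (2*k-1) / (4^k * (k.factorial:ℝ)^2)‖
        ≤ 2 * (((k:ℝ)+1) * (R^2/4) ^ k / ((k.factorial : ℝ))^2) := by
    intro k y hy
    have hyR : |y| ≤ R := (abs_lt.2 ⟨hy.1, hy.2⟩).le
    have h1 : |y| ^ (2*k-1) ≤ R ^ (2*k) :=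
      le_trans (pow_le_pow_left₀ (abs_nonneg y) hyR _)
        (pow_le_pow_right₀ hR1 (Nat.sub_le _ _))
    have hrhs : 2 * (((k:ℝ)+1) * (R^2/4) ^ k / ((k.factorial : ℝ))^2)
        = (2 * (((k:ℝ)+1) * R ^ (2*k))) / (4^k * (k.factorial:ℝ)^2) := by
      rw [div_pow, ← pow_mul]
      ring
    rw [Real.norm_eq_abs, abs_div, abs_of_pos (cpos k), abs_mul, abs_pow, hrhs]
    apply div_le_div_of_nonneg_right ?_ (cpos k).le
    have habs : |((2*k : ℕ):ℝ)| = 2*(k:ℝ) := by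
      rw [Nat.abs_cast]; push_cast; ring
    rw [habs]
    nlinarith [mul_le_mul_of_nonneg_left h1 (show (0:ℝ) ≤ 2*(k:ℝ) by positivity),
      pow_nonneg (le_trans zero_le_one hR1) (2*k)]
  have key : HasDerivAt (fun z : ℝ => ∑' k : ℕ, z ^ (2*k) / (4^k * (k.factorial:ℝ)^2))
      (∑' k : ℕ, ((2*k : ℕ):ℝ) * x ^ (2*k-1) / (4^k * (k.factorial:ℝ)^2)) x := by
    exact hasDerivAt_tsum_of_isPreconnected (summable_u R) isOpen_Ioo
      (convex_Ioo _ _).isPreconnected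
      (g := fun k y => y ^ (2*k) / (4^k * (k.factorial:ℝ)^2))
      (g' := fun k y => ((2*k : ℕ):ℝ) * y ^ (2*k-1) / (4^k * (k.factorial:ℝ)^2))
      (fun k y _ => (hasDerivAt_pow (2*k) y).div_const (4^k * (k.factorial:ℝ)^2))
      hbound hxR (summable_I0 x) hxR
  have hsum : Summable (fun k : ℕ => ((2*k : ℕ):ℝ) * x ^ (2*k-1) / (4^k * (k.factorial:ℝ)^2)) :=
    Summable.of_norm_bounded (summable_u R) (fun k => hbound k x hxR)
  have htsum : (∑' k : ℕ, ((2*k : ℕ):ℝ) * x ^ (2*k-1) / (4^k * (k.factorial:ℝ)^2))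
      = besselI1 x := by
    rw [Summable.tsum_eq_zero_add hsum]
    have h0 : ((2*0 : ℕ):ℝ) * x ^ (2*0-1) / (4^0 * ((Nat.factorial 0 : ℕ):ℝ)^2) = 0 := by
      norm_num
    rw [h0, zero_add, besselI1]
    apply tsum_congr
    intro k
    have he : 2*(k+1)-1 = 2*k+1 := by omega
    rw [he, div_eq_div_iff (by positivity) (dpos k).ne', two_pow_eq, pow_succ]
    push_cast [Nat.factorial_succ]
    ring
  rw [← htsum]
  exact key

lemma hasDerivAt_I1 (x : ℝ) : HasDerivAt besselI1 (besselS x) x := by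
  set R : ℝ := |x| + 1 with hR
  have hR1 : (1:ℝ) ≤ R := by rw [hR]; linarith [abs_nonneg x]
  have hxR : x ∈ Set.Ioo (-R) R := by
    have : |x| < R := by rw [hR]; linarith
    exact ⟨neg_lt_of_abs_lt this, lt_of_abs_lt this⟩
  have hbound : ∀ (k : ℕ) (y : ℝ), y ∈ Set.Ioo (-R) R →
      ‖((2*k+1 : ℕ):ℝ) * y ^ (2*k+1-1) /
          (2 ^ (2*k+1) * (k.factorial:ℝ) * ((k+1).factorial : ℝ))‖
        ≤ 2 * (((k:ℝ)+1) * (R^2/4) ^ k / ((k.factorial : ℝ))^2) := by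
    intro k y hy
    have hyR : |y| ≤ R := (abs_lt.2 ⟨hy.1, hy.2⟩).le
    have h1 : |y| ^ (2*k+1-1) ≤ R ^ (2*k) := by
      rw [Nat.add_sub_cancel]
      exact pow_le_pow_left₀ (abs_nonneg y) hyR _
    have hR2k : (((k:ℝ)+1) / (4 ^ k * (k.factorial : ℝ)^2)) * R ^ (2*k)
        = ((k:ℝ)+1) * (R^2/4) ^ k / ((k.factorial : ℝ))^2 := by
      rw [div_pow, ← pow_mul]
      ring
    have habs : |((2*k+1:ℕ):ℝ)| = ((2*k+1:ℕ):ℝ) := abs_of_nonneg (Nat.cast_nonneg _)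
    rw [Real.norm_eq_abs, abs_div, abs_of_pos (dpos k), abs_mul, abs_pow, habs,
      mul_div_right_comm]
    calc ((2*k+1 : ℕ):ℝ) / (2 ^ (2*k+1) * (k.factorial:ℝ) * ((k+1).factorial : ℝ))
          * |y| ^ (2*k+1-1)
        ≤ (((k:ℝ)+1) / (4 ^ k * (k.factorial : ℝ)^2)) * R ^ (2*k) :=
          mul_le_mul (coeff_S_le k) h1 (pow_nonneg (abs_nonneg y) _) (by positivity)
      _ = ((k:ℝ)+1) * (R^2/4) ^ k / ((k.factorial : ℝ))^2 := hR2k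
      _ ≤ 2 * (((k:ℝ)+1) * (R^2/4) ^ k / ((k.factorial : ℝ))^2) := by
          have : (0:ℝ) ≤ ((k:ℝ)+1) * (R^2/4) ^ k / ((k.factorial : ℝ))^2 := by positivity
          linarith
  have key : HasDerivAt (fun z : ℝ => ∑' k : ℕ,
        z ^ (2*k+1) / (2 ^ (2*k+1) * (k.factorial:ℝ) * ((k+1).factorial : ℝ)))
      (∑' k : ℕ, ((2*k+1 : ℕ):ℝ) * x ^ (2*k+1-1) /
        (2 ^ (2*k+1) * (k.factorial:ℝ) * ((k+1).factorial : ℝ))) x := by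
    exact hasDerivAt_tsum_of_isPreconnected (summable_u R) isOpen_Ioo
      (convex_Ioo _ _).isPreconnected
      (g := fun k y => y ^ (2*k+1) / (2 ^ (2*k+1) * (k.factorial:ℝ) * ((k+1).factorial : ℝ)))
      (g' := fun k y => ((2*k+1 : ℕ):ℝ) * y ^ (2*k+1-1) /
        (2 ^ (2*k+1) * (k.factorial:ℝ) * ((k+1).factorial : ℝ)))
      (fun k y _ => (hasDerivAt_pow (2*k+1) y).div_const _)
      hbound hxR (summable_I1 x) hxR
  have htsum : (∑' k : ℕ, ((2*k+1 : ℕ):ℝ) * x ^ (2*k+1-1) /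
        (2 ^ (2*k+1) * (k.factorial:ℝ) * ((k+1).factorial : ℝ))) = besselS x := by
    rw [besselS]
    apply tsum_congr
    intro k
    rw [Nat.add_sub_cancel]
  rw [← htsum]
  exact key

lemma I1_eq (w : ℝ) : besselI1 w = w * besselT w := by
  rw [besselI1, besselT, ← tsum_mul_left]
  apply tsum_congr
  intro k
  rw [← mul_div_assoc, ← pow_succ']

lemma S_eq (w : ℝ) : besselS w = besselI0 w - besselT w := by
  rw [besselS, besselI0, besselT, ← Summable.tsum_sub (summable_I0 w) (summable_T w)]
  apply tsum_congr
  intro k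
  rw [eq_sub_iff_add_eq, ← add_div, div_eq_div_iff (dpos k).ne' (cpos k).ne',
    two_pow_eq]
  push_cast [Nat.factorial_succ]
  ring

/-! ### coefficients -/

noncomputable def aC (k : ℕ) : ℝ := (4 ^ k * (k.factorial : ℝ)^2)⁻¹

noncomputable def bC (k : ℕ) : ℝ :=
  (2 ^ (2*k+1) * (k.factorial:ℝ) * ((k+1).factorial : ℝ))⁻¹

lemma aC_pos (k : ℕ) : 0 < aC k := inv_pos.2 (cpos k)
lemma bC_pos (k : ℕ) : 0 < bC k := inv_pos.2 (dpos k)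

noncomputable def SA (n : ℕ) : ℝ := ∑ ij ∈ Finset.HasAntidiagonal.antidiagonal n, aC ij.1 * aC ij.2
noncomputable def SB (n : ℕ) : ℝ := ∑ ij ∈ Finset.HasAntidiagonal.antidiagonal n, aC ij.1 * bC ij.2
noncomputable def SC (n : ℕ) : ℝ := ∑ ij ∈ Finset.HasAntidiagonal.antidiagonal n, bC ij.1 * bC ij.2

lemma choose_cast_eq {i j n : ℕ} (h : i + j = n) :
    ((n.choose i : ℕ) : ℝ) * (i.factorial : ℝ) * (j.factorial : ℝ) = (n.factorial : ℝ) := by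
  have := Nat.choose_mul_factorial_mul_factorial (show i ≤ n by omega)
  have hji : n - i = j := by omega
  rw [hji] at this
  exact_mod_cast this

lemma aC_mul_aC {i j n : ℕ} (h : i + j = n) :
    aC i * aC j = ((n.choose i * n.choose j : ℕ) : ℝ) / (4^n * ((n.factorial : ℝ))^2) := by
  have h1 := choose_cast_eq h
  have h2 := choose_cast_eq (show j + i = n by omega)
  have h4 : (4:ℝ)^n = 4^i * 4^j := by rw [← pow_add, ← h]
  have h12 : (↑(n.choose i) * (i.factorial:ℝ) * (j.factorial:ℝ))
      * (↑(n.choose j) * (j.factorial:ℝ) * (i.factorial:ℝ))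
      = (n.factorial:ℝ) * (n.factorial:ℝ) := by rw [h1, h2]
  rw [aC, aC, eq_div_iff (by positivity), h4]
  push_cast
  field_simp
  linear_combination (-1 : ℝ) * h12

lemma aC_mul_bC {i j n : ℕ} (h : i + j = n) :
    aC i * bC j = ((n.choose i * (n+1).choose (j+1) : ℕ) : ℝ) /
      (2 * 4^n * (n.factorial : ℝ) * ((n+1).factorial : ℝ)) := by
  have h1 := choose_cast_eq h
  have h2 := choose_cast_eq (show (j+1) + i = n+1 by omega)
  have h4 : (2:ℝ)^(2*j+1) = 2 * 4^j := two_pow_eq j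
  have h5 : (4:ℝ)^n = 4^i * 4^j := by rw [← pow_add, ← h]
  have h12 : (↑(n.choose i) * (i.factorial:ℝ) * (j.factorial:ℝ))
      * (↑((n+1).choose (j+1)) * ((j+1).factorial:ℝ) * (i.factorial:ℝ))
      = (n.factorial:ℝ) * ((n+1).factorial:ℝ) := by rw [h1, h2]
  rw [aC, bC, eq_div_iff (by positivity), h4, h5]
  push_cast
  field_simp
  linear_combination (-1 : ℝ) * h12

lemma bC_mul_bC {i j n : ℕ} (h : i + j = n) :
    bC i * bC j = (((n+1).choose i * (n+1).choose j : ℕ) : ℝ) /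
      (4^(n+1) * (((n+1).factorial : ℝ))^2) := by
  have h1 := choose_cast_eq (show i + (j+1) = n+1 by omega)
  have h2 := choose_cast_eq (show j + (i+1) = n+1 by omega)
  have h4 : (2:ℝ)^(2*i+1) = 2 * 4^i := two_pow_eq i
  have h5 : (2:ℝ)^(2*j+1) = 2 * 4^j := two_pow_eq j
  have h6 : (4:ℝ)^(n+1) = 4 * (4^i * 4^j) := by
    rw [← pow_add, ← h, pow_succ]
    ring
  have h12 : (↑((n+1).choose i) * (i.factorial:ℝ) * ((j+1).factorial:ℝ))
      * (↑((n+1).choose j) * (j.factorial:ℝ) * ((i+1).factorial:ℝ))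
      = ((n+1).factorial:ℝ) * ((n+1).factorial:ℝ) := by rw [h1, h2]
  rw [bC, bC, eq_div_iff (by positivity), h4, h5, h6]
  push_cast
  field_simp
  linear_combination (-4 : ℝ) * h12

lemma SA_eq (n : ℕ) : SA n = (((2*n).choose n : ℕ) : ℝ) / (4^n * ((n.factorial : ℝ))^2) := by
  rw [SA, two_mul, Nat.add_choose_eq, Nat.cast_sum, Finset.sum_div]
  apply Finset.sum_congr rfl
  intro ij hij
  rw [aC_mul_aC (Finset.HasAntidiagonal.mem_antidiagonal.1 hij)]

lemma SB_eq (n : ℕ) : SB n = (((2*n+1).choose n : ℕ) : ℝ) /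
    (2 * 4^n * (n.factorial : ℝ) * ((n+1).factorial : ℝ)) := by
  have hsum : ∑ ij ∈ Finset.HasAntidiagonal.antidiagonal n, (n.choose ij.1 * (n+1).choose (ij.2+1) : ℕ)
      = (2*n+1).choose n := by
    have h := Nat.add_choose_eq n (n+1) (n+1)
    rw [Finset.Nat.sum_antidiagonal_succ'] at h
    simp only [Nat.choose_succ_self, Nat.zero_mul, Nat.zero_add, zero_mul, zero_add] at h
    have he : n + (n+1) = 2*n+1 := by ring
    rw [he] at h
    have hsymm : (2*n+1).choose (n+1) = (2*n+1).choose n := by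
      have := Nat.choose_symm (show n+1 ≤ 2*n+1 by omega)
      have hd : 2*n+1 - (n+1) = n := by omega
      rw [hd] at this
      exact this.symm
    rw [hsymm] at h
    exact h.symm
  rw [SB, ← hsum, Nat.cast_sum, Finset.sum_div]
  apply Finset.sum_congr rfl
  intro ij hij
  rw [aC_mul_bC (Finset.HasAntidiagonal.mem_antidiagonal.1 hij)]

lemma SC_eq (n : ℕ) : SC n = (((2*n+2).choose n : ℕ) : ℝ) /
    (4^(n+1) * (((n+1).factorial : ℝ))^2) := by
  have hsum : ∑ ij ∈ Finset.HasAntidiagonal.antidiagonal n, ((n+1).choose ij.1 * (n+1).choose ij.2 : ℕ)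
      = (2*n+2).choose n := by
    have h := Nat.add_choose_eq (n+1) (n+1) n
    have he : n + 1 + (n+1) = 2*n+2 := by ring
    rw [he] at h
    exact h.symm
  rw [SC, ← hsum, Nat.cast_sum, Finset.sum_div]
  apply Finset.sum_congr rfl
  intro ij hij
  rw [bC_mul_bC (Finset.HasAntidiagonal.mem_antidiagonal.1 hij)]

lemma SA_zero : SA 0 = 1 := by
  rw [SA]
  simp [aC]

lemma SB_zero : SB 0 = 1/2 := by
  rw [SB]
  simp [aC, bC]

/-! ### the key natural-number inequalities -/

lemma nat_facts (n : ℕ) :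
    (2*n+3).choose (n+1) = (2*n+2).choose n + (2*n+2).choose (n+1) ∧
    (2*n+2).choose n * (n+2) = (2*n+2).choose (n+1) * (n+1) ∧
    (2*n+2).choose n ≤ (2*n+2).choose (n+1) := by
  refine ⟨?_, ?_, ?_⟩
  · have he : 2*n+3 = (2*n+2)+1 := by ring
    rw [he]
    exact Nat.choose_succ_succ _ _
  · have h1 := Nat.choose_succ_right_eq (2*n+2) (n+1)
    have hd : 2*n+2 - (n+1) = n+1 := by omega
    rw [hd] at h1
    have h2 : (2*n+2).choose (n+2) = (2*n+2).choose n := by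
      have := Nat.choose_symm (show n+2 ≤ 2*n+2 by omega)
      have hd2 : 2*n+2 - (n+2) = n := by omega
      rw [hd2] at this
      exact this.symm
    rw [h2] at h1
    exact h1
  · have := Nat.choose_le_middle n (2*n+2)
    have hd : (2*n+2)/2 = n+1 := by omega
    rw [hd] at this
    exact this

lemma nat_low (n : ℕ) : (2*n+2).choose (n+1) * (n+2)
    ≤ (2*n+3).choose (n+1) + 2*((2*n+2).choose n * (n+2)) := by
  obtain ⟨h1, h2, h3⟩ := nat_facts n
  rw [h1, h2]
  nlinarith [Nat.zero_le ((2*n+2).choose (n+1))]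

lemma nat_upp (n : ℕ) : (2*n+3).choose (n+1) + 2*((2*n+2).choose n * (n+2))
    ≤ 2*((2*n+2).choose (n+1) * (n+2)) := by
  obtain ⟨h1, h2, h3⟩ := nat_facts n
  rw [h1, h2]
  nlinarith [Nat.zero_le ((2*n+2).choose (n+1))]

/-! ### the key real inequalities on coefficients -/

lemma SA_succ_eq (n : ℕ) : SA (n+1) = (((2*n+2).choose (n+1) * (n+2) : ℕ) : ℝ) /
    (4^(n+1) * ((n+1).factorial : ℝ) * ((n+2).factorial : ℝ)) := by
  rw [SA_eq]
  have he : 2*(n+1) = 2*n+2 := by ring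
  rw [he, div_eq_div_iff (by positivity) (by positivity)]
  push_cast [Nat.factorial_succ (n+1)]
  ring

lemma SB_succ_eq (n : ℕ) : 2 * SB (n+1) = (((2*n+3).choose (n+1) : ℕ) : ℝ) /
    (4^(n+1) * ((n+1).factorial : ℝ) * ((n+2).factorial : ℝ)) := by
  rw [SB_eq]
  have he : 2*(n+1)+1 = 2*n+3 := by ring
  rw [he]
  have he2 : (n+1)+1 = n+2 := by ring
  rw [he2]
  field_simp

lemma SC_eq' (n : ℕ) : 2 * SC n = ((2*((2*n+2).choose n * (n+2)) : ℕ) : ℝ) /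
    (4^(n+1) * ((n+1).factorial : ℝ) * ((n+2).factorial : ℝ)) := by
  rw [SC_eq, mul_div_assoc', div_eq_div_iff (by positivity) (by positivity)]
  push_cast [Nat.factorial_succ (n+1)]
  ring

lemma key_low (n : ℕ) : SA (n+1) ≤ 2 * SB (n+1) + 2 * SC n := by
  rw [SA_succ_eq, SB_succ_eq, SC_eq', ← add_div]
  apply div_le_div_of_nonneg_right ?_ (by positivity)
  exact_mod_cast nat_low n

lemma key_upp (n : ℕ) : 2 * SB (n+1) + 2 * SC n ≤ 2 * SA (n+1) := by
  rw [SA_succ_eq, SB_succ_eq, SC_eq', ← add_div, ← mul_div_assoc]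
  apply div_le_div_of_nonneg_right ?_ (by positivity)
  exact_mod_cast nat_upp n

/-! ### Cauchy products -/

lemma antidiag_eq (u v : ℕ → ℝ) (w : ℝ) (n : ℕ) :
    ∑ ij ∈ Finset.HasAntidiagonal.antidiagonal n, (u ij.1 * w^(2*ij.1)) * (v ij.2 * w^(2*ij.2))
      = (∑ ij ∈ Finset.HasAntidiagonal.antidiagonal n, u ij.1 * v ij.2) * w^(2*n) := by
  rw [Finset.sum_mul]
  apply Finset.sum_congr rfl
  intro ij hij
  have h := Finset.HasAntidiagonal.mem_antidiagonal.1 hij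
  rw [← h, mul_add, pow_add]
  ring

lemma summable_norm_co {u : ℕ → ℝ} (hu : ∀ k, 0 ≤ u k) (w : ℝ)
    (hs : Summable fun k => u k * w^(2*k)) :
    Summable fun k => ‖u k * w^(2*k)‖ :=
  hs.congr fun k =>
    (Real.norm_of_nonneg (mul_nonneg (hu k) (even_pow_nonneg w k))).symm

lemma cauchy {u v : ℕ → ℝ} (hu : ∀ k, 0 ≤ u k) (hv : ∀ k, 0 ≤ v k) (w : ℝ)
    (hsu : Summable fun k => u k * w^(2*k)) (hsv : Summable fun k => v k * w^(2*k)) :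
    (∑' k : ℕ, u k * w^(2*k)) * (∑' k : ℕ, v k * w^(2*k))
      = ∑' n : ℕ, (∑ ij ∈ Finset.HasAntidiagonal.antidiagonal n, u ij.1 * v ij.2) * w^(2*n) := by
  rw [tsum_mul_tsum_eq_tsum_sum_antidiagonal_of_summable_norm
    (summable_norm_co hu w hsu) (summable_norm_co hv w hsv)]
  exact tsum_congr (antidiag_eq u v w)

lemma summable_cauchy {u v : ℕ → ℝ} (hu : ∀ k, 0 ≤ u k) (hv : ∀ k, 0 ≤ v k) (w : ℝ)
    (hsu : Summable fun k => u k * w^(2*k)) (hsv : Summable fun k => v k * w^(2*k)) :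
    Summable fun n : ℕ => (∑ ij ∈ Finset.HasAntidiagonal.antidiagonal n, u ij.1 * v ij.2) * w^(2*n) :=
  ((summable_norm_sum_mul_antidiagonal_of_summable_norm
    (summable_norm_co hu w hsu) (summable_norm_co hv w hsv)).of_norm).congr
      (antidiag_eq u v w)

lemma I0_series (w : ℝ) : besselI0 w = ∑' k : ℕ, aC k * w^(2*k) := by
  apply tsum_congr
  intro k
  rw [aC, div_eq_mul_inv, mul_comm]

lemma T_series (w : ℝ) : besselT w = ∑' k : ℕ, bC k * w^(2*k) := by
  apply tsum_congr
  intro k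
  rw [bC, div_eq_mul_inv, mul_comm]

lemma summable_aCw (w : ℝ) : Summable fun k : ℕ => aC k * w^(2*k) :=
  (summable_I0 w).congr fun k => by rw [aC, div_eq_mul_inv, mul_comm]

lemma summable_bCw (w : ℝ) : Summable fun k : ℕ => bC k * w^(2*k) :=
  (summable_T w).congr fun k => by rw [bC, div_eq_mul_inv, mul_comm]

lemma hA (w : ℝ) : besselI0 w * besselI0 w = ∑' n : ℕ, SA n * w^(2*n) := by
  rw [I0_series w, cauchy (fun k => (aC_pos k).le) (fun k => (aC_pos k).le) w
    (summable_aCw w) (summable_aCw w)]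
  exact tsum_congr fun n => by rw [SA]

lemma hB (w : ℝ) : besselI0 w * besselT w = ∑' n : ℕ, SB n * w^(2*n) := by
  rw [I0_series w, T_series w, cauchy (fun k => (aC_pos k).le) (fun k => (bC_pos k).le) w
    (summable_aCw w) (summable_bCw w)]
  exact tsum_congr fun n => by rw [SB]

lemma hC (w : ℝ) : besselT w * besselT w = ∑' n : ℕ, SC n * w^(2*n) := by
  rw [T_series w, cauchy (fun k => (bC_pos k).le) (fun k => (bC_pos k).le) w
    (summable_bCw w) (summable_bCw w)]
  exact tsum_congr fun n => by rw [SC]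

lemma sA (w : ℝ) : Summable fun n : ℕ => SA n * w^(2*n) :=
  (summable_cauchy (fun k => (aC_pos k).le) (fun k => (aC_pos k).le) w
    (summable_aCw w) (summable_aCw w)).congr fun n => by rw [SA]

lemma sB (w : ℝ) : Summable fun n : ℕ => SB n * w^(2*n) :=
  (summable_cauchy (fun k => (aC_pos k).le) (fun k => (bC_pos k).le) w
    (summable_aCw w) (summable_bCw w)).congr fun n => by rw [SB]

lemma sC (w : ℝ) : Summable fun n : ℕ => SC n * w^(2*n) :=
  (summable_cauchy (fun k => (bC_pos k).le) (fun k => (bC_pos k).le) w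
    (summable_bCw w) (summable_bCw w)).congr fun n => by rw [SC]

/-- shifted series for `w^2 * T^2` -/
noncomputable def G (w : ℝ) : ℕ → ℝ := fun n => Nat.rec 0 (fun m _ => SC m * w^(2*m+2)) n

lemma G_zero (w : ℝ) : G w 0 = 0 := rfl

lemma G_succ (w : ℝ) (m : ℕ) : G w (m+1) = SC m * w^(2*m+2) := rfl

lemma sG (w : ℝ) : Summable (G w) := by
  rw [← summable_nat_add_iff 1]
  exact ((sC w).mul_left (w^2)).congr fun m => by rw [G_succ, pow_add]; ring

lemma hG (w : ℝ) : w^2 * (besselT w * besselT w) = ∑' n : ℕ, G w n := by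
  have h1 : w^2 * (besselT w * besselT w) = ∑' m : ℕ, SC m * w^(2*m+2) := by
    rw [hC, ← tsum_mul_left]
    exact tsum_congr fun m => by rw [pow_add]; ring
  rw [h1, Summable.tsum_eq_zero_add (sG w), G_zero, zero_add]
  exact tsum_congr fun n => (G_succ w n).symm

lemma main_low (w : ℝ) : besselI0 w * besselI0 w
    ≤ 2*(besselI0 w * besselT w) + 2*(w^2 * (besselT w * besselT w)) := by
  rw [hA, hB, hG, ← tsum_mul_left, ← tsum_mul_left,
    ← Summable.tsum_add ((sB w).mul_left 2) ((sG w).mul_left 2)]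
  apply Summable.tsum_le_tsum ?_ (sA w) (((sB w).mul_left 2).add ((sG w).mul_left 2))
  intro n
  cases n with
  | zero =>
      simp only [Nat.mul_zero, pow_zero, mul_one, G_zero, SA_zero, SB_zero]
      norm_num
  | succ m =>
      rw [G_succ]
      have hk := mul_le_mul_of_nonneg_right (key_low m) (even_pow_nonneg w (m+1))
      have he : 2*(SB (m+1) * w^(2*(m+1))) + 2*(SC m * w^(2*m+2))
          = (2 * SB (m+1) + 2 * SC m) * w^(2*(m+1)) := by
        rw [show 2*m+2 = 2*(m+1) by ring]
        ring
      rw [he]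
      exact hk

lemma main_upp (w : ℝ) : 2*(besselI0 w * besselT w) + 2*(w^2 * (besselT w * besselT w)) + 1
    ≤ 2 * (besselI0 w * besselI0 w) := by
  have hone : (1:ℝ) = ∑' n : ℕ, (if n = 0 then (1:ℝ) else 0) := (tsum_ite_eq 0 (fun _ => (1:ℝ))).symm
  have hsite : Summable (fun n : ℕ => if n = 0 then (1:ℝ) else 0) :=
    (hasSum_ite_eq 0 (1:ℝ)).summable
  rw [hA, hB, hG, hone, ← tsum_mul_left, ← tsum_mul_left, ← tsum_mul_left,
    ← Summable.tsum_add ((sB w).mul_left 2) ((sG w).mul_left 2),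
    ← Summable.tsum_add (((sB w).mul_left 2).add ((sG w).mul_left 2)) hsite]
  apply Summable.tsum_le_tsum ?_ ((((sB w).mul_left 2).add ((sG w).mul_left 2)).add hsite)
    ((sA w).mul_left 2)
  intro n
  cases n with
  | zero =>
      simp only [Nat.mul_zero, pow_zero, mul_one, G_zero, SA_zero, SB_zero, if_pos rfl]
      norm_num
  | succ m =>
      rw [G_succ, if_neg (Nat.succ_ne_zero m), add_zero]
      have hk := mul_le_mul_of_nonneg_right (key_upp m) (even_pow_nonneg w (m+1))
      have he : 2*(SB (m+1) * w^(2*(m+1))) + 2*(SC m * w^(2*m+2))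
          = (2 * SB (m+1) + 2 * SC m) * w^(2*(m+1)) := by
        rw [show 2*m+2 = 2*(m+1) by ring]
        ring
      rw [he]
      have he2 : 2*(SA (m+1) * w^(2*(m+1))) = (2 * SA (m+1)) * w^(2*(m+1)) := by ring
      rw [he2]
      exact hk

end BesselAux

/-- For every `w ≥ 0`, the second derivative of `log I0` satisfies
`0 < (log I0)''(w) ≤ 1/2`. -/
theorem iteratedDeriv_two_log_besselI0 (w : ℝ) (hw : 0 ≤ w) :
    0 < iteratedDeriv 2 (fun x => Real.log (besselI0 x)) w ∧
    iteratedDeriv 2 (fun x => Real.log (besselI0 x)) w ≤ 1 / 2 := by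
  have hI0 := BesselAux.I0_pos w
  have hlog : deriv (fun x => Real.log (besselI0 x)) = fun x => besselI1 x / besselI0 x := by
    funext x
    exact ((BesselAux.hasDerivAt_I0 x).log (BesselAux.I0_pos x).ne').deriv
  have h2 : iteratedDeriv 2 (fun x => Real.log (besselI0 x)) w
      = (BesselAux.besselS w * besselI0 w - besselI1 w * besselI1 w) / (besselI0 w)^2 := by
    rw [show (2:ℕ) = 1+1 from rfl, iteratedDeriv_succ, iteratedDeriv_one, hlog]
    exact (((BesselAux.hasDerivAt_I1 w).div (BesselAux.hasDerivAt_I0 w)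
      (BesselAux.I0_pos w).ne')).deriv
  have hN : BesselAux.besselS w * besselI0 w - besselI1 w * besselI1 w
      = besselI0 w * besselI0 w
        - (besselI0 w * BesselAux.besselT w
            + w^2 * (BesselAux.besselT w * BesselAux.besselT w)) := by
    rw [BesselAux.S_eq, BesselAux.I1_eq]
    ring
  have hlow := BesselAux.main_low w
  have hupp := BesselAux.main_upp w
  rw [h2, hN]
  constructor
  · apply div_pos
    · linarith
    · positivity
  · rw [div_le_iff₀ (by positivity)]
    linarith
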